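/- For a non-constant binary character c on a taxon set X whose bipartition has blocks of sizes a <= b (a + b = n), the maximum of the parsimony score s(c, T) over all binary phylogenetic X-trees T equals a, the size of the smaller block. -/

import Mathlib

/-- An X-tree: a finite tree whose leaves are labelled by the taxa in `X`. -/
structure XTree (X : Type) where
  V : Type
  G : SimpleGraph V
  finV : Finite V
  isTree : G.IsTree
  leaf : X → V
  leaf_inj : Function.Injective leaf
  leaf_deg : ∀ x, (G.neighborSet (leaf x)).ncard ≤ 1
  labeled : ∀ v : V, (G.neighborSet v).ncard ≤ 2 → v ∈ Set.range leaf

namespace XTree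

variable {X : Type}

/-- `f` is an extension of the character `c` to all vertices of `T`. -/
def Extends (T : XTree X) (c : X → Bool) (f : T.V → Bool) : Prop :=
  ∀ x, f (T.leaf x) = c x

/-- The set of bichromatic (state-changing) edges of `T` under the extension `f`. -/
def changedEdges (T : XTree X) (f : T.V → Bool) : Set (Sym2 T.V) :=
  {e | e ∈ T.G.edgeSet ∧ ¬ (Sym2.map f e).IsDiag}

/-- The parsimony score `s(c,T)`: the minimum number of bichromatic edges over
all extensions of `c` to the vertices of `T`. -/
noncomputable def score (T : XTree X) (c : X → Bool) : ℕ :=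
  sInf {m | ∃ f : T.V → Bool, T.Extends c f ∧ m = (T.changedEdges f).ncard}

/-- A most parsimonious extension of `c` on `T`. -/
def IsMPExtension (T : XTree X) (c : X → Bool) (f : T.V → Bool) : Prop :=
  T.Extends c f ∧ (T.changedEdges f).ncard = T.score c

/-- `S(D,T)`: the total parsimony score of a sequence of characters. -/
noncomputable def totalScore {k : ℕ} (T : XTree X) (D : Fin k → X → Bool) : ℕ :=
  ∑ i, T.score (D i)

/-- Two X-trees are equivalent if there is a graph isomorphism between them that
commutes with the leaf labellings. -/
def Equiv (T T' : XTree X) : Prop :=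
  ∃ φ : T.G ≃g T'.G, ∀ x, φ (T.leaf x) = T'.leaf x

/-- `T` is the uniquely most parsimonious tree for `D`: every X-tree not
equivalent to `T` has strictly larger total parsimony score. -/
def UniquelyMostParsimonious {k : ℕ} (T : XTree X) (D : Fin k → X → Bool) : Prop :=
  ∀ T' : XTree X, ¬ T.Equiv T' → T.totalScore D < T'.totalScore D

/-- A vertex is a leaf vertex if it is the label of some taxon. -/
def IsLeafVertex (T : XTree X) (v : T.V) : Prop := v ∈ Set.range T.leaf

/-- A binary phylogenetic tree: leaves have degree 1 and every internal vertex
has degree 3. -/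
def IsBinary (T : XTree X) : Prop :=
  (∀ v, T.IsLeafVertex v → (T.G.neighborSet v).ncard = 1) ∧
  (∀ v, ¬ T.IsLeafVertex v → (T.G.neighborSet v).ncard = 3)

/-- `T'` is obtained from `T` by contracting the edge `{u,v}`. -/
def IsContraction (T T' : XTree X) (u v : T.V) : Prop :=
  T.G.Adj u v ∧
  ∃ q : T.V → T'.V, Function.Surjective q ∧
    (∀ x, q (T.leaf x) = T'.leaf x) ∧
    q u = q v ∧
    (∀ a b : T.V, q a = q b → a = b ∨ (a = u ∧ b = v) ∨ (a = v ∧ b = u)) ∧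
    (∀ a b : T.V, T'.G.Adj (q a) (q b) ↔ (T.G.Adj a b ∧ q a ≠ q b))

end XTree

/-- A character is non-constant if it takes both states. -/
def NonConstant {X : Type} (c : X → Bool) : Prop := ∃ x y : X, c x ≠ c y

/-- `H(D)`: the minimum homoplasy score over all X-trees (for binary
non-constant characters, `H(D,T) = S(D,T) - k`). -/
noncomputable def minHomoplasy {k : ℕ} (X : Type) (D : Fin k → X → Bool) : ℕ :=
  sInf {m | ∃ T : XTree X, m = T.totalScore D - k}

open SimpleGraph

section ParentTree

variable {V : Type} (p : V → V)

/-- The graph induced by a parent function. -/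
def parentGraph : SimpleGraph V where
  Adj u v := (p u = v ∨ p v = u) ∧ u ≠ v
  symm := by
    constructor; rintro u v ⟨h, hne⟩
    exact ⟨h.symm, hne.symm⟩
  loopless := by constructor; rintro u ⟨-, h⟩; exact h rfl

lemma parentGraph_adj {u v : V} :
    (parentGraph p).Adj u v ↔ (p u = v ∨ p v = u) ∧ u ≠ v := Iff.rfl

variable (rank : V → ℕ) (r : V)
variable (hr : p r = r) (hrank : ∀ v, v ≠ r → rank (p v) < rank v)

include hr hrank

lemma parentGraph_reachable (v : V) : (parentGraph p).Reachable v r := by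
  have key : ∀ k, ∀ v : V, rank v < k → (parentGraph p).Reachable v r := by
    intro k
    induction k with
    | zero => intro v hv; omega
    | succ k ih =>
      intro v hv
      by_cases h : v = r
      · subst h; exact Reachable.refl _
      · have hlt := hrank v h
        have hne : v ≠ p v := fun he => by rw [← he] at hlt; exact lt_irrefl _ hlt
        have hadj : (parentGraph p).Adj v (p v) := ⟨Or.inl rfl, hne⟩
        exact (Adj.reachable hadj).trans (ih (p v) (by omega))
  exact key (rank v + 1) v (by omega)

lemma parentGraph_rank_iterate_le (k : ℕ) (v : V) : rank (p^[k] v) ≤ rank v := by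
  induction k generalizing v with
  | zero => simp
  | succ k ih =>
    rw [Function.iterate_succ_apply]
    refine (ih (p v)).trans ?_
    by_cases h : v = r
    · subst h; rw [hr]
    · exact le_of_lt (hrank v h)

lemma parentGraph_isBridge_of_parent {v w : V} (hpv : p v = w)
    (hvw : (parentGraph p).Adj v w) : (parentGraph p).IsBridge s(v, w) := by
  rw [isBridge_iff_forall_walk_mem_edges]
  have hDnw : ¬ ∃ k, p^[k] w = v := by
    rintro ⟨k, hk⟩
    have hvr : v ≠ r := by
      rintro rfl
      exact hvw.ne (hpv.symm.trans hr).symm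
    have h1 : rank v ≤ rank w := hk ▸ parentGraph_rank_iterate_le p rank r hr hrank k w
    have h2 : rank w < rank v := hpv ▸ hrank v hvr
    omega
  have key : ∀ {x y : V} (q : (parentGraph p).Walk x y),
      (∃ k, p^[k] x = v) → ¬ (∃ k, p^[k] y = v) → s(v, w) ∈ q.edges := by
    intro x y q
    induction q with
    | nil => intro h1 h2; exact absurd h1 h2
    | @cons x z y h q ih =>
      intro h1 h2
      by_cases hz : ∃ k, p^[k] z = v
      · exact List.mem_cons_of_mem _ (ih hz h2)
      · obtain ⟨hor, hne⟩ := h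
        rcases hor with hxz | hzx
        · obtain ⟨k, hk⟩ := h1
          match k, hk with
          | 0, hk =>
            simp only [Function.iterate_zero, id_eq] at hk
            subst hk
            have hzw : z = w := hxz.symm.trans hpv
            subst hzw
            exact List.mem_cons_self
          | (k+1), hk =>
            exfalso
            rw [Function.iterate_succ_apply, hxz] at hk
            exact hz ⟨k, hk⟩
        · exfalso
          obtain ⟨k, hk⟩ := h1
          refine hz ⟨k + 1, ?_⟩
          rw [Function.iterate_succ_apply, hzx, hk]
      
  intro q
  exact key q ⟨0, rfl⟩ hDnw

lemma parentGraph_isTree [Finite V] : (parentGraph p).IsTree := by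
  haveI : Nonempty V := ⟨r⟩
  refine ⟨Connected.mk fun u u' => (parentGraph_reachable p rank r hr hrank u).trans
        (parentGraph_reachable p rank r hr hrank u').symm, ?_⟩
  rw [isAcyclic_iff_forall_adj_isBridge]
  intro v w hvw
  rcases hvw.1 with h | h
  · exact parentGraph_isBridge_of_parent p rank r hr hrank h hvw
  · rw [Sym2.eq_swap]
    exact parentGraph_isBridge_of_parent p rank r hr hrank h hvw.symm

end ParentTree

section Caterpillar

variable (n : ℕ)

abbrev CatV := Fin n ⊕ Fin (n - 2)

def catP (h2 : 2 ≤ n) : CatV n → CatV n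
  | .inl j => if h : 3 ≤ n then .inr ⟨min (j.1 - 1) (n - 3), lt_of_le_of_lt (min_le_right _ _) (by omega)⟩
      else .inl ⟨0, by omega⟩
  | .inr i => .inr ⟨i.1 - 1, lt_of_le_of_lt (Nat.sub_le _ _) i.isLt⟩

def catRank : CatV n → ℕ := Sum.elim (fun j => n + j.1) (fun i => i.1)

def catRoot (h2 : 2 ≤ n) : CatV n :=
  if h : 3 ≤ n then .inr ⟨0, by omega⟩ else .inl ⟨0, by omega⟩

variable {n}

lemma catP_root (h2 : 2 ≤ n) : catP n h2 (catRoot n h2) = catRoot n h2 := by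
  by_cases h3 : 3 ≤ n <;> simp [catP, catRoot, h3]

lemma catRank_lt (h2 : 2 ≤ n) : ∀ v : CatV n, v ≠ catRoot n h2 →
    catRank n (catP n h2 v) < catRank n v := by
  rintro (j | i) hv
  · by_cases h3 : 3 ≤ n
    · simp only [catP, catRank, catRoot, h3, dif_pos, Sum.elim_inl, Sum.elim_inr]
      have := min_le_right (j.1 - 1) (n - 3)
      omega
    · simp only [catP, catRank, catRoot, h3, dif_neg, not_false_iff, Sum.elim_inl] at hv ⊢
      have hj : j.1 ≠ 0 := by
        intro h0
        exact hv (by simp [Sum.inl.injEq, Fin.ext_iff, h0])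
      omega
  · have h3 : 3 ≤ n := by
      by_contra h
      have : n - 2 = 0 := by omega
      exact absurd i.isLt (by omega)
    have hi : i.1 ≠ 0 := by
      intro h0
      refine hv ?_
      simp [catRoot, h3, Sum.inr.injEq, Fin.ext_iff, h0]
    simp only [catP, catRank, Sum.elim_inr]
    omega

-- membership lemmas (n ≥ 3)
lemma cat_mem_nbr_inl (h2 : 2 ≤ n) (h3 : 3 ≤ n) {i : Fin (n-2)} {j : Fin n} :
    (Sum.inl j : CatV n) ∈ (parentGraph (catP n h2)).neighborSet (.inr i) ↔
      min (j.1 - 1) (n - 3) = i.1 := by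
  simp only [mem_neighborSet, parentGraph_adj, catP, h3, dif_pos]
  constructor
  · rintro ⟨h | h, -⟩
    · exact absurd h (by simp)
    · simpa [Sum.inr.injEq, Fin.ext_iff] using h
  · intro h
    exact ⟨Or.inr (by simp [Sum.inr.injEq, Fin.ext_iff, h]), by simp⟩

lemma cat_mem_nbr_inr (h2 : 2 ≤ n) {i k : Fin (n-2)} :
    (Sum.inr k : CatV n) ∈ (parentGraph (catP n h2)).neighborSet (.inr i) ↔
      (i.1 - 1 = k.1 ∨ k.1 - 1 = i.1) ∧ i.1 ≠ k.1 := by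
  simp only [mem_neighborSet, parentGraph_adj, catP]
  simp [Sum.inr.injEq, Fin.ext_iff, ne_eq]

end Caterpillar

section Deg
variable {n : ℕ}

lemma cat_nbr_inl (h2 : 2 ≤ n) (h3 : 3 ≤ n) (j : Fin n) :
    (parentGraph (catP n h2)).neighborSet (.inl j) =
      {Sum.inr ⟨min (j.1 - 1) (n - 3), lt_of_le_of_lt (min_le_right _ _) (by omega)⟩} := by
  ext w
  simp only [mem_neighborSet, parentGraph_adj, Set.mem_singleton_iff]
  constructor
  · rintro ⟨h | h, hne⟩
    · rw [← h]; simp [catP, h3]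
    · exfalso
      rcases w with j' | k
      · simp [catP, h3] at h
      · simp [catP] at h
  · rintro rfl
    refine ⟨Or.inl (by simp [catP, h3]), by simp⟩

lemma cat_nbr_inl_two (h2 : 2 ≤ n) (h3 : ¬ 3 ≤ n) (j : Fin n) :
    (parentGraph (catP n h2)).neighborSet (.inl j) =
      {Sum.inl ⟨1 - j.1, by omega⟩} := by
  have hn2 : n = 2 := by omega
  have hj2 := j.isLt
  ext w
  simp only [mem_neighborSet, parentGraph_adj, Set.mem_singleton_iff]
  constructor
  · rintro ⟨rfl | h, hne⟩
    · simp only [catP, h3, dif_neg, not_false_iff, ne_eq, Sum.inl.injEq, Fin.ext_iff] at hne ⊢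
      omega
    · rcases w with j' | k
      · have hj'2 := j'.isLt
        simp only [catP, h3, dif_neg, not_false_iff, ne_eq, Sum.inl.injEq, Fin.ext_iff] at h hne ⊢
        omega
      · simp [catP] at h
  · rintro rfl
    constructor
    · by_cases hj : j.1 = 0
      · exact Or.inr (by simp [catP, h3, Sum.inl.injEq, Fin.ext_iff, hj])
      · refine Or.inl ?_
        simp only [catP, h3, dif_neg, not_false_iff, Sum.inl.injEq, Fin.ext_iff]
        omega
    · simp only [ne_eq, Sum.inl.injEq, Fin.ext_iff]
      omega

lemma cat_deg_inl (h2 : 2 ≤ n) (j : Fin n) :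
    ((parentGraph (catP n h2)).neighborSet (.inl j)).ncard = 1 := by
  by_cases h3 : 3 ≤ n
  · rw [cat_nbr_inl h2 h3]; simp
  · rw [cat_nbr_inl_two h2 h3]; simp

lemma ncard_triple {α : Type*} {x y z : α} (hxy : x ≠ y) (hxz : x ≠ z) (hyz : y ≠ z) :
    ({x, y, z} : Set α).ncard = 3 := by
  rw [Set.ncard_insert_of_notMem (by simp [hxy, hxz]), Set.ncard_pair hyz]

lemma cat_deg_inr (h2 : 2 ≤ n) (h3 : 3 ≤ n) (i : Fin (n - 2)) :
    ((parentGraph (catP n h2)).neighborSet (.inr i)).ncard = 3 := by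
  have hi := i.isLt
  by_cases hi0 : i.1 = 0
  · by_cases him : i.1 = n - 3
    · -- n = 3 : neighbors are the three leaves
      have hset : (parentGraph (catP n h2)).neighborSet (.inr i) =
          {Sum.inl ⟨0, by omega⟩, Sum.inl ⟨1, by omega⟩, Sum.inl ⟨2, by omega⟩} := by
        ext w
        rcases w with j | k
        · have := j.isLt
          simp only [cat_mem_nbr_inl h2 h3, Set.mem_insert_iff, Set.mem_singleton_iff,
            Sum.inl.injEq, Fin.ext_iff]
          omega
        · have := k.isLt
          simp only [cat_mem_nbr_inr h2, Set.mem_insert_iff, Set.mem_singleton_iff]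
          constructor
          · rintro ⟨h, hne⟩; omega
          · rintro (h | h | h) <;> simp at h
      rw [hset]
      exact ncard_triple (by simp [Fin.ext_iff]) (by simp [Fin.ext_iff]) (by simp [Fin.ext_iff])
    · -- i = 0, n ≥ 4 : two leaves and the next spine vertex
      have hset : (parentGraph (catP n h2)).neighborSet (.inr i) =
          {Sum.inl ⟨0, by omega⟩, Sum.inl ⟨1, by omega⟩, Sum.inr ⟨1, by omega⟩} := by
        ext w
        rcases w with j | k
        · have := j.isLt
          simp only [cat_mem_nbr_inl h2 h3, Set.mem_insert_iff, Set.mem_singleton_iff,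
            Sum.inl.injEq, Fin.ext_iff]
          constructor
          · intro h; omega
          · rintro (h | h | h)
            · omega
            · omega
            · simp at h
        · have := k.isLt
          simp only [cat_mem_nbr_inr h2, Set.mem_insert_iff, Set.mem_singleton_iff,
            Sum.inr.injEq, Fin.ext_iff]
          constructor
          · rintro ⟨h, hne⟩
            refine Or.inr (Or.inr ?_)
            omega
          · rintro (h | h | h)
            · simp at h
            · simp at h
            · omega
      rw [hset]
      refine ncard_triple (by simp [Fin.ext_iff]) (by simp) (by simp)
  · by_cases him : i.1 = n - 3
    · -- top spine vertex : parent and two leaves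
      have hset : (parentGraph (catP n h2)).neighborSet (.inr i) =
          {Sum.inr ⟨i.1 - 1, by omega⟩, Sum.inl ⟨n - 2, by omega⟩, Sum.inl ⟨n - 1, by omega⟩} := by
        ext w
        rcases w with j | k
        · have := j.isLt
          simp only [cat_mem_nbr_inl h2 h3, Set.mem_insert_iff, Set.mem_singleton_iff,
            Sum.inl.injEq, Fin.ext_iff]
          constructor
          · intro h
            refine Or.inr ?_
            omega
          · rintro (h | h | h)
            · simp at h
            · omega
            · omega
        · have := k.isLt
          simp only [cat_mem_nbr_inr h2, Set.mem_insert_iff, Set.mem_singleton_iff,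
            Sum.inr.injEq, Fin.ext_iff]
          constructor
          · rintro ⟨h, hne⟩
            refine Or.inl ?_
            omega
          · rintro (h | h | h)
            · omega
            · simp at h
            · simp at h
      rw [hset]
      refine ncard_triple (by simp) (by simp) (by simp [Fin.ext_iff]; omega)
    · -- middle spine vertex : parent, one leaf, child spine
      have hset : (parentGraph (catP n h2)).neighborSet (.inr i) =
          {Sum.inr ⟨i.1 - 1, by omega⟩, Sum.inl ⟨i.1 + 1, by omega⟩, Sum.inr ⟨i.1 + 1, by omega⟩} := by
        ext w
        rcases w with j | k
        · have := j.isLt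
          simp only [cat_mem_nbr_inl h2 h3, Set.mem_insert_iff, Set.mem_singleton_iff,
            Sum.inl.injEq, Fin.ext_iff]
          constructor
          · intro h
            refine Or.inr (Or.inl ?_)
            omega
          · rintro (h | h | h)
            · simp at h
            · omega
            · simp at h
        · have := k.isLt
          simp only [cat_mem_nbr_inr h2, Set.mem_insert_iff, Set.mem_singleton_iff,
            Sum.inr.injEq, Fin.ext_iff]
          constructor
          · rintro ⟨h, hne⟩
            rcases h with h | h
            · exact Or.inl (by omega)
            · exact Or.inr (Or.inr (by omega))
          · rintro (h | h | h)
            · omega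
            · simp at h
            · omega
      rw [hset]
      refine ncard_triple (by simp) (by simp only [ne_eq, Sum.inr.injEq, Fin.ext_iff]; omega) (by simp)

section ScoreUpper

lemma XTree.score_le_ncard_true {X : Type} [Finite X] [Nonempty X] (T : XTree X) (c : X → Bool) :
    T.score c ≤ {x | c x = true}.ncard := by
  classical
  haveI := T.finV
  set f : T.V → Bool := fun v => if h : ∃ x, T.leaf x = v then c h.choose else false with hfdef
  have hext : T.Extends c f := by
    intro x
    have hx : ∃ y, T.leaf y = T.leaf x := ⟨x, rfl⟩
    simp only [hfdef, dif_pos hx]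
    exact congrArg c (T.leaf_inj hx.choose_spec)
  have htrue : ∀ u : T.V, f u = true → ∃ x, T.leaf x = u ∧ c x = true := by
    intro u hu
    by_cases h : ∃ x, T.leaf x = u
    · refine ⟨h.choose, h.choose_spec, ?_⟩
      rw [hfdef] at hu
      simpa [dif_pos h] using hu
    · rw [hfdef] at hu
      simp [dif_neg h] at hu
  have hsub : ∀ e ∈ T.changedEdges f, ∃ x, T.leaf x ∈ e ∧ c x = true := by
    intro e he
    induction e using Sym2.ind with
    | _ u v =>
      obtain ⟨hE, hd⟩ := he
      rw [Sym2.map_pair_eq, Sym2.mk_isDiag_iff] at hd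
      rcases Bool.eq_false_or_eq_true (f u) with hu | hu
      · obtain ⟨x, hx, hcx⟩ := htrue u hu
        exact ⟨x, by rw [hx]; exact Sym2.mem_mk_left u v, hcx⟩
      · have hv : f v = true := by
          cases hfv : f v
          · rw [hu, hfv] at hd; exact absurd rfl hd
          · rfl
        obtain ⟨x, hx, hcx⟩ := htrue v hv
        exact ⟨x, by rw [hx]; exact Sym2.mem_mk_right u v, hcx⟩
  set ψ : Sym2 T.V → X := fun e =>
    if h : ∃ x, T.leaf x ∈ e ∧ c x = true then h.choose else Classical.arbitrary X with hψ
  have hmaps : ∀ e ∈ T.changedEdges f, ψ e ∈ {x | c x = true} := by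
    intro e he
    have h := hsub e he
    simp only [hψ, dif_pos h]
    exact h.choose_spec.2
  have hmem : ∀ e ∈ T.changedEdges f, T.leaf (ψ e) ∈ e := by
    intro e he
    have h := hsub e he
    simp only [hψ, dif_pos h]
    exact h.choose_spec.1
  have hinj : Set.InjOn ψ (T.changedEdges f) := by
    intro e1 h1 e2 h2 hee
    by_contra hne
    set w := T.leaf (ψ e1) with hw
    have hm1 : w ∈ e1 := hmem e1 h1
    have hm2 : w ∈ e2 := by rw [hw, hee]; exact hmem e2 h2
    have ho1 := Sym2.other_spec hm1
    have ho2 := Sym2.other_spec hm2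
    have hne' : Sym2.Mem.other hm1 ≠ Sym2.Mem.other hm2 := by
      intro h
      apply hne
      rw [← ho1, ← ho2, h]
    have ha1' : T.G.Adj w (Sym2.Mem.other hm1) := by
      rw [← SimpleGraph.mem_edgeSet, ho1]; exact h1.1
    have ha2' : T.G.Adj w (Sym2.Mem.other hm2) := by
      rw [← SimpleGraph.mem_edgeSet, ho2]; exact h2.1
    have hsub2 : {Sym2.Mem.other hm1, Sym2.Mem.other hm2} ⊆ T.G.neighborSet w := by
      rintro z (rfl | rfl)
      · exact ha1'
      · exact ha2'
    have h2le : 2 ≤ (T.G.neighborSet w).ncard := by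
      rw [← Set.ncard_pair hne']
      exact Set.ncard_le_ncard hsub2 (Set.toFinite _)
    have hld := T.leaf_deg (ψ e1)
    rw [← hw] at hld
    omega
  have hcount : (T.changedEdges f).ncard ≤ {x | c x = true}.ncard :=
    Set.ncard_le_ncard_of_injOn ψ hmaps hinj (Set.toFinite _)
  exact le_trans (Nat.sInf_le ⟨f, hext, rfl⟩) hcount

end ScoreUpper


section CatTreeDef

variable {X : Type} [Finite X] {n : ℕ}

noncomputable def catTree (h2 : 2 ≤ n) (e : X ≃ Fin n) : XTree X where
  V := CatV n
  G := parentGraph (catP n h2)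
  finV := by infer_instance
  isTree := parentGraph_isTree (catP n h2) (catRank n) (catRoot n h2)
    (catP_root h2) (catRank_lt h2)
  leaf := fun x => .inl (e x)
  leaf_inj := fun x y h => e.injective (Sum.inl_injective h)
  leaf_deg := fun x => le_of_eq (cat_deg_inl h2 (e x))
  labeled := by
    rintro (j | i) hdeg
    · exact ⟨e.symm j, by simp⟩
    · exfalso
      have h3 : 3 ≤ n := by
        have := i.isLt
        omega
      rw [cat_deg_inr h2 h3 i] at hdeg
      omega

lemma catTree_binary (h2 : 2 ≤ n) (e : X ≃ Fin n) : (catTree h2 e).IsBinary := by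
  constructor
  · rintro v ⟨x, rfl⟩
    exact le_antisymm (le_of_eq (cat_deg_inl h2 (e x))) (le_of_eq (cat_deg_inl h2 (e x)).symm)
  · rintro (j | i) hv
    · exact absurd ⟨e.symm j, by simp [catTree, XTree.IsLeafVertex]⟩ hv
    · exact cat_deg_inr h2 (by have := i.isLt; omega) i

lemma catTree_score_ge {a : ℕ} (h2 : 2 ≤ n) (e : X ≃ Fin n) (c : X → Bool)
    (h2a : 2 * a ≤ n) (ha1 : 1 ≤ a)
    (hce : ∀ x, c x = true ↔ ((e x).1 < 2 * a ∧ (e x).1 % 2 = 0)) :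
    a ≤ (catTree h2 e).score c := by
  classical
  haveI := (catTree h2 e).finV
  have hnonempty : {m | ∃ f : (catTree h2 e).V → Bool, (catTree h2 e).Extends c f ∧
      m = ((catTree h2 e).changedEdges f).ncard}.Nonempty := by
    refine ⟨_, (Sum.elim (fun j => c (e.symm j)) (fun _ => false) : CatV n → Bool), ?_, rfl⟩
    intro x
    simp [catTree, XTree.Extends]
  refine le_csInf hnonempty ?_
  rintro m ⟨f, hf, rfl⟩
  have hleaf : ∀ j : Fin n, f (Sum.inl j) = c (e.symm j) := by
    intro j
    have h := hf (e.symm j)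
    simpa [catTree] using h
  have hleaf' : ∀ j : Fin n, f (Sum.inl j) = true ↔ (j.1 < 2 * a ∧ j.1 % 2 = 0) := by
    intro j
    rw [hleaf j, hce (e.symm j)]
    simp
  by_cases h3 : 3 ≤ n
  · -- main case: a edge-disjoint changed edges
    set t : Fin a → CatV n := fun i => Sum.inl ⟨2 * i.1, by have := i.isLt; omega⟩ with hdt
    set t' : Fin a → CatV n := fun i => Sum.inl ⟨2 * i.1 + 1, by have := i.isLt; omega⟩ with hdt'
    set u : Fin a → CatV n := fun i => Sum.inr ⟨min (2 * i.1 - 1) (n - 3), by omega⟩ with hdu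
    set u' : Fin a → CatV n := fun i => Sum.inr ⟨min (2 * i.1) (n - 3), by omega⟩ with hdu'
    have ht : ∀ i, f (t i) = true := by
      intro i
      have hi := i.isLt
      simp only [hdt]
      rw [hleaf']
      constructor
      · show 2 * i.1 < 2 * a
        omega
      · show 2 * i.1 % 2 = 0
        omega
    have ht' : ∀ i, f (t' i) = false := by
      intro i
      have hi := i.isLt
      have hnt : ¬ (f (t' i) = true) := by
        simp only [hdt']
        rw [hleaf']
        simp only [not_and]
        intro h
        show ¬((2 * i.1 + 1) % 2 = 0)
        omega
      simpa using hnt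
    have hadj_t : ∀ i, (parentGraph (catP n h2)).Adj (t i) (u i) := by
      intro i
      refine ⟨Or.inl ?_, by simp [hdt, hdu]⟩
      simp only [hdt, hdu, catP, h3, dif_pos, Sum.inr.injEq, Fin.ext_iff]
    have hadj_t' : ∀ i, (parentGraph (catP n h2)).Adj (t' i) (u' i) := by
      intro i
      refine ⟨Or.inl ?_, by simp [hdt', hdu']⟩
      simp only [hdt', hdu', catP, h3, dif_pos, Sum.inr.injEq, Fin.ext_iff]
      omega
    have hspine : ∀ i : Fin a, f (u i) ≠ f (u' i) →
        (parentGraph (catP n h2)).Adj (u' i) (u i) ∧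
          min (2 * i.1 - 1) (n - 3) = 2 * i.1 - 1 ∧
          min (2 * i.1) (n - 3) = 2 * i.1 ∧ 1 ≤ i.1 := by
      intro i hne
      have hvne : min (2 * i.1 - 1) (n - 3) ≠ min (2 * i.1) (n - 3) := by
        intro h
        exact hne (by simp [hdu, hdu', Fin.ext_iff, h])
      have hfacts : 1 ≤ i.1 ∧ 2 * i.1 ≤ n - 3 := by omega
      refine ⟨⟨Or.inl ?_, ?_⟩, by omega, by omega, hfacts.1⟩
      · simp only [hdu, hdu', catP, Sum.inr.injEq, Fin.ext_iff]
        omega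
      · simp only [hdu, hdu', ne_eq, Sum.inr.injEq, Fin.ext_iff]
        omega
    set g : Fin a → Sym2 (CatV n) := fun i =>
      if f (t i) = f (u i) then
        (if f (u i) = f (u' i) then s(u' i, t' i) else s(u i, u' i))
      else s(t i, u i) with hdg
    have hg_mem : ∀ i, g i ∈ (catTree h2 e).changedEdges f := by
      intro i
      simp only [hdg]
      by_cases hc1 : f (t i) = f (u i)
      · by_cases hc2 : f (u i) = f (u' i)
        · rw [if_pos hc1, if_pos hc2]
          refine ⟨(hadj_t' i).symm, ?_⟩
          erw [Sym2.map_pair_eq, Sym2.mk_isDiag_iff]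
          rw [ht' i, ← hc2, ← hc1, ht i]
          simp
        · rw [if_pos hc1, if_neg hc2]
          refine ⟨((hspine i hc2).1).symm, ?_⟩
          erw [Sym2.map_pair_eq, Sym2.mk_isDiag_iff]
          exact hc2
      · rw [if_neg hc1]
        refine ⟨hadj_t i, ?_⟩
        erw [Sym2.map_pair_eq, Sym2.mk_isDiag_iff]
        intro h
        exact hc1 h
    have hg_inj : Function.Injective g := by
      intro i i' hgg
      simp only [hdg] at hgg
      by_cases hc1 : f (t i) = f (u i) <;> by_cases hc1' : f (t i') = f (u i')
      · by_cases hc2 : f (u i) = f (u' i) <;> by_cases hc2' : f (u i') = f (u' i')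
        · rw [if_pos hc1, if_pos hc2, if_pos hc1', if_pos hc2'] at hgg
          rcases Sym2.eq_iff.mp hgg with ⟨h1, h2⟩ | ⟨h1, h2⟩ <;>
            simp only [hdt, hdt', hdu, hdu', Sum.inl.injEq, Sum.inr.injEq, reduceCtorEq, Fin.ext_iff] at h1 h2 <;>
            exact Fin.ext (by omega)
        · rw [if_pos hc1, if_pos hc2, if_pos hc1', if_neg hc2'] at hgg
          obtain ⟨-, e1', e2', e3'⟩ := hspine i' hc2'
          rcases Sym2.eq_iff.mp hgg with ⟨h1, h2⟩ | ⟨h1, h2⟩ <;>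
            simp only [hdt, hdt', hdu, hdu', Sum.inl.injEq, Sum.inr.injEq, reduceCtorEq, Fin.ext_iff] at h1 h2 <;>
            exact Fin.ext (by omega)
        · rw [if_pos hc1, if_neg hc2, if_pos hc1', if_pos hc2'] at hgg
          obtain ⟨-, e1, e2, e3⟩ := hspine i hc2
          rcases Sym2.eq_iff.mp hgg with ⟨h1, h2⟩ | ⟨h1, h2⟩ <;>
            simp only [hdt, hdt', hdu, hdu', Sum.inl.injEq, Sum.inr.injEq, reduceCtorEq, Fin.ext_iff] at h1 h2 <;>
            exact Fin.ext (by omega)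
        · rw [if_pos hc1, if_neg hc2, if_pos hc1', if_neg hc2'] at hgg
          obtain ⟨-, e1, e2, e3⟩ := hspine i hc2
          obtain ⟨-, e1', e2', e3'⟩ := hspine i' hc2'
          rcases Sym2.eq_iff.mp hgg with ⟨h1, h2⟩ | ⟨h1, h2⟩ <;>
            simp only [hdt, hdt', hdu, hdu', Sum.inl.injEq, Sum.inr.injEq, reduceCtorEq, Fin.ext_iff] at h1 h2 <;>
            exact Fin.ext (by omega)
      · by_cases hc2 : f (u i) = f (u' i)
        · rw [if_pos hc1, if_pos hc2, if_neg hc1'] at hgg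
          rcases Sym2.eq_iff.mp hgg with ⟨h1, h2⟩ | ⟨h1, h2⟩ <;>
            simp only [hdt, hdt', hdu, hdu', Sum.inl.injEq, Sum.inr.injEq, reduceCtorEq, Fin.ext_iff] at h1 h2 <;>
            exact Fin.ext (by omega)
        · rw [if_pos hc1, if_neg hc2, if_neg hc1'] at hgg
          obtain ⟨-, e1, e2, e3⟩ := hspine i hc2
          rcases Sym2.eq_iff.mp hgg with ⟨h1, h2⟩ | ⟨h1, h2⟩ <;>
            simp only [hdt, hdt', hdu, hdu', Sum.inl.injEq, Sum.inr.injEq, reduceCtorEq, Fin.ext_iff] at h1 h2 <;>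
            exact Fin.ext (by omega)
      · by_cases hc2' : f (u i') = f (u' i')
        · rw [if_neg hc1, if_pos hc1', if_pos hc2'] at hgg
          rcases Sym2.eq_iff.mp hgg with ⟨h1, h2⟩ | ⟨h1, h2⟩ <;>
            simp only [hdt, hdt', hdu, hdu', Sum.inl.injEq, Sum.inr.injEq, reduceCtorEq, Fin.ext_iff] at h1 h2 <;>
            exact Fin.ext (by omega)
        · rw [if_neg hc1, if_pos hc1', if_neg hc2'] at hgg
          obtain ⟨-, e1', e2', e3'⟩ := hspine i' hc2'
          rcases Sym2.eq_iff.mp hgg with ⟨h1, h2⟩ | ⟨h1, h2⟩ <;>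
            simp only [hdt, hdt', hdu, hdu', Sum.inl.injEq, Sum.inr.injEq, reduceCtorEq, Fin.ext_iff] at h1 h2 <;>
            exact Fin.ext (by omega)
      · rw [if_neg hc1, if_neg hc1'] at hgg
        rcases Sym2.eq_iff.mp hgg with ⟨h1, h2⟩ | ⟨h1, h2⟩ <;>
          simp only [hdt, hdt', hdu, hdu', Sum.inl.injEq, Sum.inr.injEq, reduceCtorEq, Fin.ext_iff] at h1 h2 <;>
          exact Fin.ext (by omega)
    have hrange : Set.range g ⊆ (catTree h2 e).changedEdges f := by
      rintro _ ⟨i, rfl⟩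
      exact hg_mem i
    calc a = Nat.card (Fin a) := by simp
      _ = Nat.card (Set.range g) := (Nat.card_range_of_injective hg_inj).symm
      _ = (Set.range g).ncard := Nat.card_coe_set_eq _
      _ ≤ ((catTree h2 e).changedEdges f).ncard :=
          Set.ncard_le_ncard hrange (Set.toFinite _)
  · -- n = 2
    have hn2 : n = 2 := by omega
    have ha2 : a = 1 := by omega
    have hmem : s(Sum.inl ⟨0, by omega⟩, Sum.inl ⟨1, by omega⟩) ∈
        (catTree h2 e).changedEdges f := by
      constructor
      · show (parentGraph (catP n h2)).Adj _ _
        refine ⟨Or.inr ?_, by simp [Fin.ext_iff]⟩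
        simp only [catP, h3, dif_neg, not_false_iff, Sum.inl.injEq, Fin.ext_iff]
      · erw [Sym2.map_pair_eq, Sym2.mk_isDiag_iff]
        have h0 : f (Sum.inl ⟨0, by omega⟩) = true := by
          rw [hleaf']
          constructor
          · show 0 < 2 * a
            omega
          · show 0 % 2 = 0
            omega
        have h1 : f (Sum.inl ⟨1, by omega⟩) = false := by
          have hnt : ¬ (f (Sum.inl (⟨1, by omega⟩ : Fin n)) = true) := by
            rw [hleaf']
            simp only [not_and]
            intro h
            show ¬(1 % 2 = 0)
            omega
          simpa using hnt
        rw [h0, h1]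
        simp
    have hpos : 0 < ((catTree h2 e).changedEdges f).ncard := by
      rw [Set.ncard_pos (Set.toFinite _)]
      exact ⟨_, hmem⟩
    omega

end CatTreeDef


section GoodEquiv

lemma exists_good_equiv {X : Type} [Finite X] {n a : ℕ} (hn : Nat.card X = n) (c : X → Bool)
    (ha : {x | c x = true}.ncard = a) (h2a : 2 * a ≤ n) :
    ∃ e : X ≃ Fin n, ∀ x, c x = true ↔ ((e x).1 < 2 * a ∧ (e x).1 % 2 = 0) := by
  classical
  haveI := Fintype.ofFinite X
  have eP : {j : Fin n // j.1 < 2 * a ∧ j.1 % 2 = 0} ≃ Fin a :=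
    { toFun := fun jp => ⟨jp.1.1 / 2, by obtain ⟨h1, h2⟩ := jp.2; omega⟩
      invFun := fun i => ⟨⟨2 * i.1, by have := i.isLt; omega⟩,
        ⟨by show 2 * i.1 < 2 * a; have := i.isLt; omega, by show 2 * i.1 % 2 = 0; omega⟩⟩
      left_inv := fun jp => Subtype.ext (Fin.ext (by
        obtain ⟨h1, h2⟩ := jp.2
        show 2 * (jp.1.1 / 2) = jp.1.1
        omega))
      right_inv := fun i => Fin.ext (by show 2 * i.1 / 2 = i.1; omega) }
  have hXcard : Fintype.card X = n := by rw [← Nat.card_eq_fintype_card, hn]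
  have h1T : Fintype.card {x // c x = true} = a := by
    rw [← Nat.card_eq_fintype_card]
    rw [← ha]
    exact Nat.card_coe_set_eq _
  have h1P : Fintype.card {j : Fin n // j.1 < 2 * a ∧ j.1 % 2 = 0} = a := by
    rw [← Nat.card_eq_fintype_card, Nat.card_congr eP]
    simp
  have eT : {x // c x = true} ≃ {j : Fin n // j.1 < 2 * a ∧ j.1 % 2 = 0} :=
    Fintype.equivOfCardEq (by rw [h1T, h1P])
  have eF : {x // ¬ c x = true} ≃ {j : Fin n // ¬(j.1 < 2 * a ∧ j.1 % 2 = 0)} :=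
    Fintype.equivOfCardEq (by
      rw [Fintype.card_subtype_compl, Fintype.card_subtype_compl, h1T, h1P, hXcard,
        Fintype.card_fin])
  refine ⟨(Equiv.sumCompl (fun x => c x = true)).symm.trans
    ((eT.sumCongr eF).trans (Equiv.sumCompl (fun j : Fin n => j.1 < 2 * a ∧ j.1 % 2 = 0))), ?_⟩
  intro x
  obtain ⟨y, hy⟩ : ∃ y, (Equiv.sumCompl (fun x => c x = true)).symm x = y := ⟨_, rfl⟩
  have hxy : (Equiv.sumCompl (fun x => c x = true)) y = x := by
    rw [← hy, Equiv.apply_symm_apply]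
  simp only [Equiv.trans_apply, hy]
  cases y with
  | inl xp =>
    have hx : c x = true := by rw [← hxy]; exact xp.2
    simp only [Equiv.sumCongr_apply, Sum.map_inl, Equiv.sumCompl_apply_inl]
    exact iff_of_true hx (eT xp).2
  | inr xp =>
    have hx : ¬ c x = true := by rw [← hxy]; exact xp.2
    simp only [Equiv.sumCongr_apply, Sum.map_inr, Equiv.sumCompl_apply_inr]
    exact iff_of_false hx (eF xp).2

end GoodEquiv

/-- for a non-constant binary character `c` whose bipartition has
blocks of sizes `a ≤ b` with `a + b = n`, the maximum of `s(c,T)` over all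
binary phylogenetic X-trees equals `a`. -/
theorem stmt12 {X : Type} [Finite X] {n a b : ℕ} (hn : Nat.card X = n)
    (c : X → Bool)
    (ha : {x | c x = true}.ncard = a) (hb : {x | c x = false}.ncard = b)
    (hab : a ≤ b) (hsum : a + b = n) (ha1 : 1 ≤ a) :
    IsGreatest {m | ∃ T : XTree X, T.IsBinary ∧ m = T.score c} a := by
  have hb1 : 1 ≤ b := le_trans ha1 hab
  have h2n : 2 ≤ n := by omega
  have h2a : 2 * a ≤ n := by omega
  haveI : Nonempty X := by
    have hne : {x | c x = true}.Nonempty := by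
      rw [← Set.ncard_pos (Set.toFinite _)] at *
      omega
    exact ⟨hne.choose⟩
  obtain ⟨e, hce⟩ := exists_good_equiv hn c ha h2a
  constructor
  · refine ⟨catTree h2n e, catTree_binary h2n e, ?_⟩
    have hup : (catTree h2n e).score c ≤ a := by
      have := XTree.score_le_ncard_true (catTree h2n e) c
      omega
    have hlo : a ≤ (catTree h2n e).score c := catTree_score_ge h2n e c h2a ha1 hce
    omega
  · rintro m ⟨T, -, rfl⟩
    have := XTree.score_le_ncard_true T c
    omega
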